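/- If a hypersurface M^m in a space form N^{m+1}(C) is Einstein with Ric^M = μg (μ constant), then the mean curvature identity μ|∇H|² = ((m−1)C − (3/4)m²H²)|∇H|², valid at points where A(∇H) = −(m/2)H∇H, forces H to be locally constant: on any open set where ∇H ≠ 0, H² = (4/(3m²))((m−1)C − μ) is constant, a contradiction; hence ∇H ≡ 0. -/
import Mathlib


noncomputable section

open scoped RealInnerProductSpace BigOperators

/-- Abstract data encoding an isometrically immersed (connected, orientable) hypersurface
`M^m ↪ N^{m+1}`: `V` is a model for the tangent spaces of `M` (an `m`-dimensional real
inner product space), `A` is the shape operator field, `H` the mean curvature function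
(so `trace A = m H`), together with the gradient, Laplace and Hessian operators and the
Ricci curvature of the induced metric, subject to the standard rules of Riemannian
calculus (connectedness of `M` is encoded by `const_of_grad`, and the Bochner formula
holds).  `mixed p X Y` denotes the ambient curvature term `R^N(X, ξ, Y, ξ)` at `p`,
where `ξ` is the chosen unit normal. -/
structure HypersurfaceData (m : ℕ) (M : Type) (V : Type)
    [NormedAddCommGroup V] [InnerProductSpace ℝ V] [FiniteDimensional ℝ V] : Type where
  dimV : Module.finrank ℝ V = m
  /-- the shape operator -/
  A : M → V →ₗ[ℝ] V
  A_symm : ∀ p (x y : V), ⟪A p x, y⟫ = ⟪x, A p y⟫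
  /-- the mean curvature function -/
  H : M → ℝ
  trace_A : ∀ p, LinearMap.trace ℝ V (A p) = m * H p
  /-- the gradient operator of `(M, g)` -/
  grad : (M → ℝ) → M → V
  /-- the Laplace operator of `(M, g)` -/
  lap : (M → ℝ) → M → ℝ
  /-- `hess2 f` is `|∇df|²`, the squared norm of the Hessian of `f` -/
  hess2 : (M → ℝ) → M → ℝ
  /-- the Ricci curvature of `(M, g)` -/
  ricci : M → V → V → ℝ
  /-- `mixed p X Y = R^N(X, ξ, Y, ξ)` -/
  mixed : M → V → V → ℝ
  grad_add : ∀ f g : M → ℝ, grad (fun p => f p + g p) = fun p => grad f p + grad g p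
  grad_mul : ∀ f g : M → ℝ,
    grad (fun p => f p * g p) = fun p => f p • grad g p + g p • grad f p
  grad_const : ∀ c : ℝ, grad (fun _ => c) = fun _ => 0
  lap_const : ∀ c : ℝ, lap (fun _ => c) = fun _ => 0
  const_of_grad : ∀ f : M → ℝ, (∀ p, grad f p = 0) → ∀ p q, f p = f q
  hess2_nonneg : ∀ f p, 0 ≤ hess2 f p
  hess2_bound : ∀ f p, (lap f p) ^ 2 ≤ m * hess2 f p
  bochner : ∀ (f : M → ℝ) (p : M),
    lap (fun q => ‖grad f q‖ ^ 2) p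
      = 2 * (hess2 f p + ricci p (grad f p) (grad f p) + ⟪grad f p, grad (lap f) p⟫)

namespace HypersurfaceData

variable {m : ℕ} {M V : Type} [NormedAddCommGroup V] [InnerProductSpace ℝ V]
  [FiniteDimensional ℝ V] (D : HypersurfaceData m M V)

/-- `|A|²`, the squared norm of the shape operator. -/
def normA2 (p : M) : ℝ := LinearMap.trace ℝ V (D.A p ∘ₗ D.A p)

/-- The scalar curvature of `M` (trace of the Ricci curvature). -/
def scal (p : M) : ℝ :=
  ∑ i, D.ricci p (stdOrthonormalBasis ℝ V i) (stdOrthonormalBasis ℝ V i)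

/-- `M` has constant scalar curvature. -/
def ConstScal : Prop := ∀ p q, D.scal p = D.scal q

/-- `M` is minimal, i.e. `H ≡ 0`. -/
def Minimal : Prop := ∀ p, D.H p = 0

/-- The biharmonic equations for a hypersurface of an Einstein manifold with
`Ric^N = lam·h` :  `ΔH = H(|A|² - lam)` and `A(∇H) + (m/2) H ∇H = 0`. -/
def IsBiharmonic (lam : ℝ) : Prop :=
  (∀ p, D.lap D.H p = D.H p * (D.normA2 p - lam)) ∧
  (∀ p, D.A p (D.grad D.H p) + ((m : ℝ) / 2 * D.H p) • D.grad D.H p = 0)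

/-- The contracted Gauss equation for a hypersurface of a space form of constant
sectional curvature `C`, where `Ric^N(X,Y) = m C ⟨X,Y⟩` and `R^N(X,ξ,Y,ξ) = C ⟨X,Y⟩`
for tangent `X, Y`. -/
def SpaceFormGauss (C : ℝ) : Prop :=
  ∀ p (X Y : V), (m : ℝ) * C * ⟪X, Y⟫
    = D.ricci p X Y + ⟪D.A p X, D.A p Y⟫ - m * D.H p * ⟪D.A p X, Y⟫ + C * ⟪X, Y⟫

/-- The contracted Gauss equation for a hypersurface of an Einstein manifold with
`Ric^N = lam·h`. -/
def EinsteinAmbientGauss (lam : ℝ) : Prop :=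
  ∀ p (X Y : V), lam * ⟪X, Y⟫
    = D.ricci p X Y + ⟪D.A p X, D.A p Y⟫ - m * D.H p * ⟪D.A p X, Y⟫ + D.mixed p X Y

/-- `Ric^N(ξ,ξ) = lam`: the trace over the tangent directions of `R^N(·,ξ,·,ξ)`
equals the ambient Ricci curvature in the normal direction. -/
def MixedTrace (lam : ℝ) : Prop :=
  ∀ p, ∑ i, D.mixed p (stdOrthonormalBasis ℝ V i) (stdOrthonormalBasis ℝ V i) = lam

end HypersurfaceData

/-- **Constancy of the mean curvature of Einstein hypersurfaces of space forms.**
Let `M^m` be an Einstein hypersurface (`Ric^M = μ g`, `μ` a real constant) of a space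
form of curvature `C` satisfying the second biharmonic equation
`A(∇H) = −(m/2)H∇H` at every point.  The identity
`μ|∇H|² = ((m−1)C − (3/4)m²H²)|∇H|²` forces `H` to be locally constant: wherever
`∇H ≠ 0` we get `H² = (4/(3m²))((m−1)C − μ)` constant, a contradiction; hence `∇H ≡ 0`
and `H` is constant on `M`. -/
theorem einstein_hypersurface_mean_curvature_constant {M V : Type}
    [NormedAddCommGroup V] [InnerProductSpace ℝ V] [FiniteDimensional ℝ V]
    {m : ℕ} (hm : 0 < m) (D : HypersurfaceData m M V) (C μ : ℝ)
    (hgauss : D.SpaceFormGauss C)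
    (heinstein : ∀ p (X Y : V), D.ricci p X Y = μ * ⟪X, Y⟫)
    (htangency : ∀ p,
      D.A p (D.grad D.H p) + ((m : ℝ) / 2 * D.H p) • D.grad D.H p = 0) :
    (∀ p, D.grad D.H p ≠ 0 →
        (D.H p) ^ 2 = 4 / (3 * (m : ℝ) ^ 2) * (((m : ℝ) - 1) * C - μ)) ∧
      (∀ p, D.grad D.H p = 0) ∧ (∀ p q, D.H p = D.H q) := by
  have hm' : (m : ℝ) ≠ 0 := Nat.cast_ne_zero.mpr hm.ne'
  set c : ℝ := 4 / (3 * (m : ℝ) ^ 2) * (((m : ℝ) - 1) * C - μ) with hc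
  have key : ∀ p, D.grad D.H p ≠ 0 → (D.H p) ^ 2 = c := by
    intro p hp
    set g := D.grad D.H p with hgdef
    have hA : D.A p g = (-((m : ℝ) / 2 * D.H p)) • g := by
      have h := htangency p
      have : D.A p g = -(((m : ℝ) / 2 * D.H p) • g) :=
        eq_neg_of_add_eq_zero_left h
      simpa [neg_smul] using this
    have hg := hgauss p g g
    rw [heinstein, hA] at hg
    rw [real_inner_smul_left, real_inner_smul_right, real_inner_smul_left] at hg
    have hne : ⟪g, g⟫ ≠ 0 := by
      simpa [inner_self_eq_zero] using hp
    have hkey : (m : ℝ) * C = μ + ((m : ℝ) / 2 * D.H p) ^ 2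
        + (m : ℝ) * D.H p * ((m : ℝ) / 2 * D.H p) + C := by
      have h2 : ((m : ℝ) * C) * ⟪g, g⟫
          = (μ + ((m : ℝ) / 2 * D.H p) ^ 2
            + (m : ℝ) * D.H p * ((m : ℝ) / 2 * D.H p) + C) * ⟪g, g⟫ := by
        linear_combination hg
      exact mul_right_cancel₀ hne h2
    rw [hc]
    have h3 : (3 : ℝ) * (m : ℝ) ^ 2 ≠ 0 := by positivity
    field_simp
    linear_combination (-4 : ℝ) * hkey
  refine ⟨key, ?_⟩
  have hgrad0 : ∀ p, D.grad D.H p = 0 := by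
    by_contra h
    push_neg at h
    obtain ⟨p₀, hp₀⟩ := h
    have hHH := D.grad_mul D.H D.H
    set u : M → ℝ := fun p => D.H p * D.H p + -c with hu
    have hgu : ∀ p, D.grad u p
        = (D.H p • D.grad D.H p + D.H p • D.grad D.H p) + 0 := by
      intro p
      have h1 := D.grad_add (fun p => D.H p * D.H p) (fun _ => -c)
      have h3 := D.grad_const (-c)
      have : D.grad u = fun p => D.grad (fun p => D.H p * D.H p) p
          + D.grad (fun _ => (-c : ℝ)) p := by rw [hu]; exact h1
      rw [this, hHH, h3]
    set f : M → ℝ := fun p => u p * u p with hf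
    have hgf : ∀ p, D.grad f p = 0 := by
      intro p
      have h2' : D.grad f p = u p • D.grad u p + u p • D.grad u p := by
        rw [hf]; exact congrFun (D.grad_mul u u) p
      rw [h2']
      by_cases hz : D.grad D.H p = 0
      · have hgup : D.grad u p = 0 := by rw [hgu p, hz]; simp
        rw [hgup]; simp
      · have hup : u p = 0 := by
          simp only [hu]; linear_combination key p hz
        rw [hup]; simp
    have hfconst := D.const_of_grad f hgf
    have hfp₀ : f p₀ = 0 := by
      simp only [hf, hu]
      linear_combination (D.H p₀ * D.H p₀ - c) * key p₀ hp₀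
    have hHHc : ∀ q, D.H q * D.H q = c := by
      intro q
      have h0 : f q = 0 := (hfconst q p₀).trans hfp₀
      have hu0 : u q = 0 := by
        apply mul_self_eq_zero.mp
        simpa [hf] using h0
      simp only [hu] at hu0
      linarith
    have hHHfun : (fun p => D.H p * D.H p) = fun _ => c := funext hHHc
    have hgHH0 : D.H p₀ • D.grad D.H p₀ + D.H p₀ • D.grad D.H p₀ = 0 := by
      have h4 := congrFun hHH p₀
      rw [hHHfun, D.grad_const] at h4
      exact h4.symm
    have hH0 : D.H p₀ = 0 := by
      have h1 : (2 * D.H p₀) • D.grad D.H p₀ = 0 := by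
        rw [two_mul, add_smul]; exact hgHH0
      rcases smul_eq_zero.mp h1 with h | h
      · linarith
      · exact absurd h hp₀
    have hc0 : c = 0 := by
      have h5 := hHHc p₀; rw [hH0] at h5; linarith
    have hHzero : ∀ q, D.H q = 0 := by
      intro q
      apply mul_self_eq_zero.mp
      rw [hHHc q, hc0]
    have hH : D.H = fun _ => (0 : ℝ) := funext hHzero
    rw [hH, D.grad_const] at hp₀
    exact hp₀ rfl
  exact ⟨hgrad0, D.const_of_grad D.H hgrad0⟩
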